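/- Let A --f--> B --f'--> C --δ--> A⟦1⟧ be a distinguished triangle, and let h: E → B and h': B → D be morphisms with h' ∘ h = 0. If h is X-monic and h' ∘ f is X-monic, then f' ∘ h: E → C is X-monic. -/

import Mathlib

/-!
Common definitions: the ideal of morphisms factoring through a subcategory `X`
(given as a set of objects of `C`), `X`-monic and `X`-epic morphisms, left and
right `X`-approximations, additive subcategories closed under isomorphisms,
direct sums and direct summands, and the additive quotient category `C/X`
(realized via `CategoryTheory.Quotient` of the relation `xRel X`).
-/

open CategoryTheory Category Limits Pretriangulated

universe v u

namespace PaperStmt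

variable {C : Type u} [Category.{v} C]

/-- `f` factors through an object of `X`. -/
def FactorsThru (X : Set C) {A B : C} (f : A ⟶ B) : Prop :=
  ∃ (M : C) (g : A ⟶ M) (h : M ⟶ B), M ∈ X ∧ g ≫ h = f

/-- `f : A ⟶ B` is `X`-monic: the map `Hom(B, X') → Hom(A, X')`, `g ↦ g ∘ f`,
is surjective for every object `X'` of `X`. -/
def IsXMonic (X : Set C) {A B : C} (f : A ⟶ B) : Prop :=
  ∀ ⦃X' : C⦄, X' ∈ X → ∀ g : A ⟶ X', ∃ h : B ⟶ X', f ≫ h = g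

/-- `f : A ⟶ B` is `X`-epic: the map `Hom(X', A) → Hom(X', B)`, `g ↦ f ∘ g`,
is surjective for every object `X'` of `X`. -/
def IsXEpic (X : Set C) {A B : C} (f : A ⟶ B) : Prop :=
  ∀ ⦃X' : C⦄, X' ∈ X → ∀ g : X' ⟶ B, ∃ h : X' ⟶ A, h ≫ f = g

/-- `α : A ⟶ X₀` is a left `X`-approximation of `A`: `X₀` lies in `X` and every
morphism from `A` to an object of `X` factors through `α`. -/
def IsLeftApprox (X : Set C) {A X₀ : C} (α : A ⟶ X₀) : Prop :=
  X₀ ∈ X ∧ IsXMonic X α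

/-- `β : X₀ ⟶ B` is a right `X`-approximation of `B`: `X₀` lies in `X` and every
morphism from an object of `X` to `B` factors through `β`. -/
def IsRightApprox (X : Set C) {X₀ B : C} (β : X₀ ⟶ B) : Prop :=
  X₀ ∈ X ∧ IsXEpic X β

/-- `X` is (the object class of) a full additive subcategory of `C`, closed
under isomorphisms, finite direct sums and direct summands. -/
structure IsAdditiveClosedSubcat [Preadditive C] [HasBinaryBiproducts C] (X : Set C) :
    Prop where
  zero_mem : ∀ Z : C, IsZero Z → Z ∈ X
  iso_closed : ∀ {A B : C}, (A ≅ B) → A ∈ X → B ∈ X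
  sum_closed : ∀ {A B : C}, A ∈ X → B ∈ X → (A ⊞ B) ∈ X
  summand_closed : ∀ {A B : C}, (A ⊞ B) ∈ X → A ∈ X

/-- Two morphisms are identified in the quotient category `C/X` precisely when
their difference factors through an object of `X`. -/
def xRel [Preadditive C] (X : Set C) : HomRel C :=
  fun _ _ f g => FactorsThru X (f - g)

/-- let `A --f--> B --f'--> Z --δ--> A⟦1⟧` be a distinguished
triangle and `h : E ⟶ B`, `h' : B ⟶ D` morphisms with `h' ∘ h = 0`. If `h` is
`X`-monic and `h' ∘ f` is `X`-monic, then `f' ∘ h : E ⟶ Z` is `X`-monic. -/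
theorem statement4 [Preadditive C] [HasZeroObject C] [HasShift C ℤ]
    [∀ n : ℤ, (shiftFunctor C n).Additive] [Pretriangulated C] [HasBinaryBiproducts C]
    (X : Set C) (hX : IsAdditiveClosedSubcat X)
    {A B Z E D : C}
    (f : A ⟶ B) (f' : B ⟶ Z) (δ : Z ⟶ (A⟦(1 : ℤ)⟧))
    (hT : Triangle.mk f f' δ ∈ distTriang C)
    (h : E ⟶ B) (h' : B ⟶ D) (hzero : h ≫ h' = 0)
    (hh : IsXMonic X h) (hhf : IsXMonic X (f ≫ h')) :
    IsXMonic X (h ≫ f') := by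
  intro X' hX' g
  obtain ⟨k, hk⟩ := hh hX' g
  obtain ⟨s, hs⟩ := hhf hX' (f ≫ k)
  obtain ⟨t, ht⟩ := Triangle.yoneda_exact₂ _ hT (k - h' ≫ s)
    (by simp [Triangle.mk, Preadditive.comp_sub, ← hs]; rfl)
  exact ⟨t, by change _ = f' ≫ t at ht; refine (assoc h f' t).trans ?_; rw [← ht]; simp [Preadditive.comp_sub, hk, reassoc_of% hzero]⟩

end PaperStmt
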